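/- Any union of rows of G_N is invariant under every elementary permutation composed with bit-reversal conjugation: if P = ⋁_{i∈L} G_N^{(i)} for some nonempty L ⊆ {0,...,N-1}, then for every elementary permutation φ_{k,j}, B_N(φ_{k,j}(B_N(P))) has the same Hamming weight as P and B_N(P) is invariant under the procedure φ of Algorithm 1; in particular, φ(B_N(P)) = B_N(P) where φ applies each φ_{k,j} only when the left block [P(k),...,P(k+2^j-1)] is lexicographically smaller than the right block [P(k+2^j),...,P(k+2^{j+1}-1)]. -/

import Mathlib

theorem testBit_split (n a b s : ℕ) (hb : b < 2^n) :
    (2^n*a+b).testBit s = if s < n then b.testBit s else a.testBit (s-n) := by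
  rcases lt_or_ge s n with h | h
  · simp only [h, if_true]
    rw [Nat.testBit_eq_decide_div_mod_eq, Nat.testBit_eq_decide_div_mod_eq]
    have hdvd : 2^n = 2^s * 2^(n-s) := by rw [← pow_add]; congr 1; omega
    have hq : (2^n*a+b)/2^s = 2^(n-s)*a + b/2^s := by
      rw [show 2^n*a = 2^s*(2^(n-s)*a) by rw [← Nat.mul_assoc, ← pow_add]; congr 2; omega]
      exact Nat.mul_add_div (Nat.two_pow_pos s) _ _
    rw [hq]
    have hev : 2^(n-s)*a % 2 = 0 := by
      have h2 : (2:ℕ) ∣ 2^(n-s)*a := Dvd.dvd.mul_right (dvd_pow_self 2 (by omega)) a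
      omega
    have hm : (2^(n-s)*a + b/2^s) % 2 = b/2^s % 2 := by omega
    rw [hm]
  · simp only [Nat.not_lt.mpr h, if_false]
    rw [Nat.testBit_eq_decide_div_mod_eq, Nat.testBit_eq_decide_div_mod_eq]
    have hdvd : 2^s = 2^n * 2^(s-n) := by rw [← pow_add]; congr 1; omega
    have h1 : (2^n*a+b)/2^n = a := by
      rw [Nat.mul_add_div (Nat.two_pow_pos n), Nat.div_eq_of_lt hb]; omega
    have hq : (2^n*a+b)/2^s = a/2^(s-n) := by
      rw [hdvd, ← Nat.div_div_eq_div_mul, h1]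
    rw [hq]

theorem sub_iff (x y : ℕ) : x &&& y = x ↔ ∀ s, x.testBit s = true → y.testBit s = true := by
  constructor
  · intro h s hs
    have := congrArg (fun z => z.testBit s) h
    simp only [Nat.testBit_and, hs, Bool.true_and] at this
    exact this
  · intro h
    apply Nat.eq_of_testBit_eq
    intro s
    rw [Nat.testBit_and]
    cases hx : x.testBit s
    · simp
    · simp [h s hx]

theorem and_split (n a b c d : ℕ) (hb : b < 2^n) (hd : d < 2^n) :
    (2^n*a+b) &&& (2^n*c+d) = 2^n*(a&&&c) + (b&&&d) := by
  have hbd : b &&& d < 2^n := lt_of_le_of_lt (Nat.and_le_left) hb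
  apply Nat.eq_of_testBit_eq
  intro s
  rw [Nat.testBit_and, testBit_split n a b s hb, testBit_split n c d s hd,
    testBit_split n _ _ s hbd, Nat.testBit_and, Nat.testBit_and]
  split <;> rfl


def G2 : Matrix (Fin 2) (Fin 2) (ZMod 2) := !![1,0;1,1]

def Gmat : (n : ℕ) → Matrix (Fin (2^n)) (Fin (2^n)) (ZMod 2)
  | 0 => 1
  | n+1 =>
    Matrix.reindex (finProdFinEquiv.trans (finCongr (by rw [pow_succ, Nat.mul_comm])))
      (finProdFinEquiv.trans (finCongr (by rw [pow_succ, Nat.mul_comm])))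
      (Matrix.kroneckerMap (· * ·) G2 (Gmat n))

def bitRev : ℕ → ℕ → ℕ
  | 0, _ => 0
  | n+1, i => 2^n * (i % 2) + bitRev n (i / 2)

theorem bitRev_lt (n i : ℕ) : bitRev n i < 2^n := by
  induction n generalizing i with
  | zero => simp [bitRev]
  | succ n ih =>
    have h1 : i % 2 < 2 := Nat.mod_lt _ (by norm_num)
    have h2 := ih (i / 2)
    have h3 : 2^n * (i % 2) ≤ 2^n := by
      calc 2^n * (i % 2) ≤ 2^n * 1 := Nat.mul_le_mul_left _ (by omega)
        _ = 2^n := by omega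
    have h4 : 2^(n+1) = 2^n * 2 := pow_succ 2 n
    simp only [bitRev]
    omega

def bitRevFin (n : ℕ) (i : Fin (2^n)) : Fin (2^n) := ⟨bitRev n i.val, bitRev_lt n i.val⟩

def bitRevVec (n : ℕ) (P : Fin (2^n) → Bool) : Fin (2^n) → Bool :=
  fun i => P (bitRevFin n i)

def elemPerm (j k i : ℕ) : ℕ :=
  if i < k ∨ k + 2^(j+1) ≤ i then i
  else if i < k + 2^j then i + 2^j
  else i - 2^j

def elemPermVec (n j k : ℕ) (P : Fin (2^n) → Bool) : Fin (2^n) → Bool :=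
  fun i => P ⟨elemPerm j k i.val % 2^n, Nat.mod_lt _ (Nat.two_pow_pos n)⟩

def ElemValid (n j k : ℕ) : Prop := j + 1 ≤ n ∧ 2^(j+1) ∣ k ∧ k < 2^n

def wt {m : ℕ} (P : Fin m → Bool) : ℕ := (Finset.univ.filter fun i => P i = true).card

def IsRowUnion (n : ℕ) (P : Fin (2^n) → Bool) : Prop :=
  ∃ L : Finset (Fin (2^n)), L.Nonempty ∧ ∀ j, P j = true ↔ ∃ i ∈ L, Gmat n i j = 1

def blockLt (n j k : ℕ) (P : Fin (2^n) → Bool) : Prop :=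
  ∃ t < 2^j,
    (∀ s < t, P ⟨(k+s) % 2^n, Nat.mod_lt _ (Nat.two_pow_pos n)⟩
              = P ⟨(k+2^j+s) % 2^n, Nat.mod_lt _ (Nat.two_pow_pos n)⟩) ∧
    P ⟨(k+t) % 2^n, Nat.mod_lt _ (Nat.two_pow_pos n)⟩ = false ∧
    P ⟨(k+2^j+t) % 2^n, Nat.mod_lt _ (Nat.two_pow_pos n)⟩ = true

instance (n j k : ℕ) (P : Fin (2^n) → Bool) : Decidable (blockLt n j k P) := by
  unfold blockLt; infer_instance

def algPhi (n : ℕ) (P : Fin (2^n) → Bool) : Fin (2^n) → Bool :=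
  (List.range n).foldl (fun Q j =>
    (List.range (2^(n-j-1))).foldl (fun R m =>
      if blockLt n j (m * 2^(j+1)) R then elemPermVec n j (m * 2^(j+1)) R else R) Q) P

def Pplus (n : ℕ) (P : Fin (2^(n+1)) → Bool) : Fin (2^n) → Bool :=
  fun m => P ⟨2*m.val, by have := m.isLt; have h : 2^(n+1) = 2^n*2 := pow_succ 2 n; omega⟩
        || P ⟨2*m.val+1, by have := m.isLt; have h : 2^(n+1) = 2^n*2 := pow_succ 2 n; omega⟩

def Pminus (n : ℕ) (P : Fin (2^(n+1)) → Bool) : Fin (2^n) → Bool :=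
  fun m => P ⟨2*m.val, by have := m.isLt; have h : 2^(n+1) = 2^n*2 := pow_succ 2 n; omega⟩
        && P ⟨2*m.val+1, by have := m.isLt; have h : 2^(n+1) = 2^n*2 := pow_succ 2 n; omega⟩

def eraseMap : (n : ℕ) → (Fin (2^n) → Bool) → Fin (2^n) → Bool
  | 0, P => P
  | n+1, P => fun i =>
      if h : i.val < 2^n then eraseMap n (Pplus n P) ⟨i.val, h⟩
      else eraseMap n (Pminus n P)
        ⟨i.val - 2^n, by have := i.isLt; have h2 : 2^(n+1) = 2^n*2 := pow_succ 2 n; omega⟩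

def lowHalf (n : ℕ) (P : Fin (2^(n+1)) → Bool) : Fin (2^n) → Bool :=
  fun i => P ⟨i.val, by have := i.isLt; have h : 2^(n+1) = 2^n*2 := pow_succ 2 n; omega⟩

def highHalf (n : ℕ) (P : Fin (2^(n+1)) → Bool) : Fin (2^n) → Bool :=
  fun i => P ⟨2^n + i.val, by have := i.isLt; have h : 2^(n+1) = 2^n*2 := pow_succ 2 n; omega⟩

def lexLT {m : ℕ} (A B : Fin m → Bool) : Prop :=
  ∃ k, (∀ i, i < k → A i = B i) ∧ A k = false ∧ B k = true

def PatEquiv (n : ℕ) (P P' : Fin (2^n) → Bool) : Prop :=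
  ∃ L : List (ℕ × ℕ), (∀ p ∈ L, ElemValid n p.1 p.2) ∧
    P' = bitRevVec n (L.foldl (fun Q p => elemPermVec n p.1 p.2 Q) (bitRevVec n P))

theorem bitRev_testBit (n : ℕ) : ∀ (i t : ℕ), t < n →
    (bitRev n i).testBit t = i.testBit (n-1-t) := by
  induction n with
  | zero => intro i t ht; omega
  | succ n ih =>
    intro i t ht
    have hlt := bitRev_lt n (i/2)
    show (2^n * (i % 2) + bitRev n (i/2)).testBit t = _
    rw [testBit_split n _ _ t hlt]
    rcases lt_or_ge t n with h | h
    · simp only [h, if_true]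
      rw [ih (i/2) t h]
      rw [Nat.testBit_div_two]
      congr 1; omega
    · have ht' : t = n := by omega
      simp only [ht', lt_irrefl, if_false, Nat.sub_self]
      have h0 : n + 1 - 1 - n = 0 := by omega
      rw [h0, Nat.testBit_zero, Nat.testBit_zero,
        Nat.mod_mod_of_dvd i (dvd_refl 2)]

theorem bitRev_testBit_ge (n i t : ℕ) (ht : n ≤ t) : (bitRev n i).testBit t = false :=
  Nat.testBit_lt_two_pow (lt_of_lt_of_le (bitRev_lt n i) (Nat.pow_le_pow_right (by norm_num) ht))

theorem bitRev_bitRev (n i : ℕ) (hi : i < 2^n) : bitRev n (bitRev n i) = i := by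
  apply Nat.eq_of_testBit_eq
  intro t
  rcases lt_or_ge t n with h | h
  · rw [bitRev_testBit n _ t h, bitRev_testBit n i (n-1-t) (by omega)]
    congr 1; omega
  · rw [bitRev_testBit_ge n _ t h, Nat.testBit_lt_two_pow
      (lt_of_lt_of_le hi (Nat.pow_le_pow_right (by norm_num) h))]

theorem bitRev_mono (n x y : ℕ) (hsub : x &&& y = x) :
    bitRev n x &&& bitRev n y = bitRev n x := by
  rw [sub_iff] at hsub ⊢
  intro s hs
  rcases lt_or_ge s n with h | h
  · rw [bitRev_testBit n y s h]
    rw [bitRev_testBit n x s h] at hs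
    exact hsub _ hs
  · rw [bitRev_testBit_ge n x s h] at hs; exact absurd hs (by simp)
theorem divmod_unique (n A B : ℕ) (hB : B < 2^n) :
    (2^n*A+B)/2^n = A ∧ (2^n*A+B)%2^n = B := by
  constructor
  · rw [Nat.mul_add_div (Nat.two_pow_pos n), Nat.div_eq_of_lt hB]; omega
  · rw [Nat.mul_add_mod, Nat.mod_eq_of_lt hB]

theorem and_split_sub (n A B C D : ℕ) (hB : B < 2^n) (hD : D < 2^n) :
    (2^n*A+B) &&& (2^n*C+D) = 2^n*A+B ↔ (A &&& C = A ∧ B &&& D = B) := by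
  rw [and_split n A B C D hB hD]
  constructor
  · intro h
    have hu1 := divmod_unique n (A&&&C) (B&&&D) (lt_of_le_of_lt Nat.and_le_left hB)
    have hu2 := divmod_unique n A B hB
    exact ⟨by rw [← hu1.1, h, hu2.1], by rw [← hu1.2, h, hu2.2]⟩
  · intro ⟨h1, h2⟩; rw [h1, h2]

theorem G2_entry : ∀ a c : Fin 2, G2 a c = if c.val &&& a.val = c.val then 1 else 0 := by
  intro a c; fin_cases a <;> fin_cases c <;> rfl

theorem gmat_entry (n : ℕ) : ∀ (i j : Fin (2^n)),
    Gmat n i j = if j.val &&& i.val = j.val then 1 else 0 := by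
  induction n with
  | zero =>
    intro i j
    have h1 := i.isLt
    have h2 := j.isLt
    have hij : i = j := by apply Fin.ext; omega
    subst hij
    simp [Gmat, Matrix.one_apply, Nat.and_self]
  | succ n ih =>
    intro i j
    have hilt := i.isLt
    have hjlt := j.isLt
    have hps := pow_succ 2 n
    have h2 : Gmat (n+1) i j
        = G2 ⟨i.val/2^n, Nat.div_lt_of_lt_mul (by omega)⟩
            ⟨j.val/2^n, Nat.div_lt_of_lt_mul (by omega)⟩
          * Gmat n ⟨i.val % 2^n, Nat.mod_lt _ (Nat.two_pow_pos n)⟩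
            ⟨j.val % 2^n, Nat.mod_lt _ (Nat.two_pow_pos n)⟩ := rfl
    rw [h2, G2_entry, ih]
    have hmi : i.val % 2^n < 2^n := Nat.mod_lt _ (Nat.two_pow_pos n)
    have hmj : j.val % 2^n < 2^n := Nat.mod_lt _ (Nat.two_pow_pos n)
    have hji := and_split_sub n (j.val/2^n) (j.val%2^n) (i.val/2^n) (i.val%2^n) hmj hmi
    rw [Nat.div_add_mod, Nat.div_add_mod] at hji
    rcases Classical.em (j.val &&& i.val = j.val) with h | h
    · rw [hji] at h
      simp [hji, h.1, h.2]
    · have h' := h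
      rw [hji] at h'
      simp only [h, if_false]
      rcases Classical.em (j.val/2^n &&& i.val/2^n = j.val/2^n) with h1 | h1 <;>
        rcases Classical.em (j.val%2^n &&& i.val%2^n = j.val%2^n) with h2' | h2' <;>
        simp [h1, h2'] <;> exact absurd ⟨h1, h2'⟩ h'

theorem gmat_eq_one (n : ℕ) (i j : Fin (2^n)) :
    Gmat n i j = 1 ↔ j.val &&& i.val = j.val := by
  rw [gmat_entry]
  split
  · simpa
  · constructor
    · intro h; exact absurd h (by decide)
    · intro h; simp_all
theorem foldl_fixed {α β : Type*} (f : α → β → α) (Q : α) (l : List β)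
    (h : ∀ x ∈ l, f Q x = Q) : l.foldl f Q = Q := by
  induction l with
  | nil => rfl
  | cons a l ih =>
    rw [List.foldl_cons, h a (List.mem_cons_self)]
    exact ih (fun x hx => h x (List.mem_cons_of_mem a hx))

theorem wt_comp {m : ℕ} (P : Fin m → Bool) (σ : Fin m → Fin m)
    (hσ : ∀ i, σ (σ i) = i) : wt (fun i => P (σ i)) = wt P := by
  unfold wt
  apply Finset.card_bij' (fun i _ => σ i) (fun i _ => σ i)
  · intro a ha
    simp only [Finset.mem_filter, Finset.mem_univ, true_and] at ha ⊢
    exact ha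
  · intro a ha
    simp only [Finset.mem_filter, Finset.mem_univ, true_and] at ha ⊢
    rw [hσ]; exact ha
  · intro a _; exact hσ a
  · intro a _; exact hσ a

theorem elemValid_bound (n j k : ℕ) (h : ElemValid n j k) : k + 2^(j+1) ≤ 2^n := by
  obtain ⟨hjn, hdvd, hk⟩ := h
  have h1 : 2^(j+1) ∣ 2^n := pow_dvd_pow 2 hjn
  have h2 : 2^(j+1) ∣ 2^n - k := Nat.dvd_sub h1 hdvd
  have h3 : 0 < 2^n - k := by omega
  have h4 : 2^(j+1) ≤ 2^n - k := Nat.le_of_dvd h3 h2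
  omega

theorem elemPerm_lt (n j k : ℕ) (h : ElemValid n j k) (i : ℕ) (hi : i < 2^n) :
    elemPerm j k i < 2^n := by
  have hb := elemValid_bound n j k h
  have hps : 2^(j+1) = 2^j * 2 := pow_succ 2 j
  unfold elemPerm
  split
  · exact hi
  · split <;> omega

theorem elemPerm_elemPerm (j k i : ℕ) : elemPerm j k (elemPerm j k i) = i := by
  have hps : 2^(j+1) = 2^j * 2 := pow_succ 2 j
  unfold elemPerm
  rcases Nat.lt_or_ge i k with h1 | h1
  · simp only [h1, true_or, if_true]
  · rcases Nat.lt_or_ge i (k + 2^j) with h2 | h2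
    · rcases Nat.lt_or_ge i (k + 2^(j+1)) with h3 | h3
      · have : ¬ (i < k ∨ k + 2^(j+1) ≤ i) := by omega
        simp only [this, if_false, h2, if_true]
        have : ¬ (i + 2^j < k ∨ k + 2^(j+1) ≤ i + 2^j) := by omega
        simp only [this, if_false]
        have : ¬ (i + 2^j < k + 2^j) := by omega
        simp only [this, if_false]
        omega
      · omega
    · rcases Nat.lt_or_ge i (k + 2^(j+1)) with h3 | h3
      · have : ¬ (i < k ∨ k + 2^(j+1) ≤ i) := by omega
        simp only [this, if_false]
        have : ¬ (i < k + 2^j) := by omega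
        simp only [this, if_false]
        have : ¬ (i - 2^j < k ∨ k + 2^(j+1) ≤ i - 2^j) := by omega
        simp only [this, if_false]
        have : i - 2^j < k + 2^j := by omega
        simp only [this, if_true]
        omega
      · have : i < k ∨ k + 2^(j+1) ≤ i := by omega
        simp only [this, if_true]

def DownClosed (n : ℕ) (Q : Fin (2^n) → Bool) : Prop :=
  ∀ x y : Fin (2^n), x.val &&& y.val = x.val → Q y = true → Q x = true

theorem bitRevVec_downClosed (n : ℕ) (L : Finset (Fin (2^n))) (P : Fin (2^n) → Bool)
    (hP : ∀ j, P j = true ↔ ∃ i ∈ L, Gmat n i j = 1) :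
    DownClosed n (bitRevVec n P) := by
  intro x y hxy hQy
  unfold bitRevVec at hQy ⊢
  rw [hP] at hQy ⊢
  obtain ⟨i, hiL, hGi⟩ := hQy
  refine ⟨i, hiL, ?_⟩
  rw [gmat_eq_one] at hGi ⊢
  have hx : (bitRevFin n x).val = bitRev n x.val := rfl
  have hy : (bitRevFin n y).val = bitRev n y.val := rfl
  rw [hx] at *
  rw [hy] at hGi
  have hmono := bitRev_mono n x.val y.val hxy
  calc bitRev n x.val &&& i.val
      = (bitRev n x.val &&& bitRev n y.val) &&& i.val := by rw [hmono]
    _ = bitRev n x.val &&& (bitRev n y.val &&& i.val) := Nat.and_assoc _ _ _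
    _ = bitRev n x.val &&& bitRev n y.val := by rw [hGi]
    _ = bitRev n x.val := hmono

theorem no_blockLt (n j m : ℕ) (hj : j < n) (hm : m < 2^(n-j-1))
    (Q : Fin (2^n) → Bool) (hDC : DownClosed n Q) : ¬ blockLt n j (m * 2^(j+1)) Q := by
  rintro ⟨t, ht, _, hfalse, htrue⟩
  set k := m * 2^(j+1) with hk
  have hbound : k + 2^(j+1) ≤ 2^n := by
    have h1 : (m+1) * 2^(j+1) ≤ 2^(n-j-1) * 2^(j+1) := Nat.mul_le_mul_right _ (by omega)
    have h2 : 2^(n-j-1) * 2^(j+1) = 2^n := by rw [← pow_add]; congr 1; omega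
    calc k + 2^(j+1) = (m+1) * 2^(j+1) := by ring
      _ ≤ 2^n := by omega
  have hps : 2^(j+1) = 2^j * 2 := pow_succ 2 j
  have hlt1 : k + t < 2^n := by omega
  have hlt2 : k + 2^j + t < 2^n := by omega
  have hsub : (k + t) &&& (k + 2^j + t) = k + t := by
    rw [sub_iff]
    intro s hs
    have e1 : k + t = 2^(j+1) * m + t := by ring
    have e2 : k + 2^j + t = 2^(j+1) * m + (2^j + t) := by ring
    rw [e1, testBit_split (j+1) m t s (by omega)] at hs
    rw [e2, testBit_split (j+1) m (2^j+t) s (by omega)]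
    rcases lt_or_ge s (j+1) with h | h
    · simp only [h, if_true] at hs ⊢
      rcases lt_or_ge s j with h' | h'
      · have e3 : 2^j + t = 2^j * 1 + t := by ring
        rw [e3, testBit_split j 1 t s ht]
        simp only [h', if_true]
        exact hs
      · have hsj : s = j := by omega
        rw [hsj] at hs
        rw [Nat.testBit_lt_two_pow ht] at hs
        exact absurd hs (by simp)
    · simp only [Nat.not_lt.mpr h, if_false] at hs ⊢
      exact hs
  have hmod1 : (k + t) % 2^n = k + t := Nat.mod_eq_of_lt hlt1
  have hmod2 : (k + 2^j + t) % 2^n = k + 2^j + t := Nat.mod_eq_of_lt hlt2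
  have := hDC ⟨(k+t) % 2^n, Nat.mod_lt _ (Nat.two_pow_pos n)⟩
    ⟨(k+2^j+t) % 2^n, Nat.mod_lt _ (Nat.two_pow_pos n)⟩
    (by simp only [hmod1, hmod2]; exact hsub) htrue
  rw [this] at hfalse
  exact absurd hfalse (by simp)

theorem algPhi_fixed (n : ℕ) (Q : Fin (2^n) → Bool) (hDC : DownClosed n Q) :
    algPhi n Q = Q := by
  unfold algPhi
  apply foldl_fixed
  intro j hj
  rw [List.mem_range] at hj
  apply foldl_fixed
  intro m hm
  rw [List.mem_range] at hm
  rw [if_neg (no_blockLt n j m hj hm Q hDC)]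

def sigma' (n j k : ℕ) : Fin (2^n) → Fin (2^n) := fun i =>
  bitRevFin n ⟨elemPerm j k (bitRevFin n i).val % 2^n, Nat.mod_lt _ (Nat.two_pow_pos n)⟩

theorem sigma'_invol (n j k : ℕ) (hv : ElemValid n j k) (i : Fin (2^n)) :
    sigma' n j k (sigma' n j k i) = i := by
  apply Fin.ext
  show bitRev n (elemPerm j k (bitRev n (bitRev n (elemPerm j k (bitRev n i.val)
    % 2^n))) % 2^n) = i.val
  have hu : bitRev n i.val < 2^n := bitRev_lt n i.val
  have he : elemPerm j k (bitRev n i.val) < 2^n := elemPerm_lt n j k hv _ hu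
  rw [Nat.mod_eq_of_lt he, bitRev_bitRev n _ he, elemPerm_elemPerm,
    Nat.mod_eq_of_lt hu, bitRev_bitRev n _ i.isLt]

/-- a union of rows of G_N has B_N(φ_{k,j}(B_N(P))) of the same
Hamming weight as P for every elementary permutation, and B_N(P) is a fixed
point of the function φ of Algorithm 1. -/
theorem stmt11 (n : ℕ) (L : Finset (Fin (2^n))) (hL : L.Nonempty)
    (P : Fin (2^n) → Bool)
    (hP : ∀ j, P j = true ↔ ∃ i ∈ L, Gmat n i j = 1) :
    (∀ j k, ElemValid n j k →
        wt (bitRevVec n (elemPermVec n j k (bitRevVec n P))) = wt P) ∧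
    algPhi n (bitRevVec n P) = bitRevVec n P := by
  constructor
  · intro j k hv
    have heq : bitRevVec n (elemPermVec n j k (bitRevVec n P))
        = fun i => P (sigma' n j k i) := rfl
    rw [heq]
    exact wt_comp P _ (sigma'_invol n j k hv)
  · exact algPhi_fixed n _ (bitRevVec_downClosed n L P hP)
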